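/- The optimal value of the following semidefinite program equals 3/4: maximize ⟨σ, P_accept⟩ over density matrices σ on X₀ ⊗ X₁ ⊗ G₀ ⊗ G₁ = (ℂ²)^{⊗4} and density matrices σ_B on ℂ³, subject to Tr_{G₀,G₁}(σ) = Tr_B(U₂ (|ψ⟩⟨ψ| ⊗ σ_B) U₂†), where |ψ⟩ = (1/2) Σ_{x₀,x₁∈{0,1}} |x₀ x₁⟩ ∈ X₀ ⊗ X₁, U₂ = Σ_{x₀,x₁∈{0,1}} |x₀x₁⟩⟨x₀x₁| ⊗ U_{x₀x₁} with U_{x₀x₁} = diag((−1)^{x₀}, (−1)^{x₁}, 1) acting on ℂ³, and P_accept = Σ_{x₀,x₁∈{0,1}} |x₀x₁⟩⟨x₀x₁|_{X₀⊗X₁} ⊗ |x₀x₁⟩⟨x₀x₁|_{G₀⊗G₁}. Moreover, the optimum is attained at σ_B = (1/3)·1_{ℂ³}. (This is the optimal probability with which a cheating Alice learns both of Bob's bits in the 1-out-of-2 oblivious transfer protocol.) -/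

import Mathlib

/-! STATEMENT 4: Alice's optimal cheating probability in the 1-out-of-2 oblivious transfer protocol equals 3/4, attained at σ_B = (1/3)·1. -/

open Matrix
open scoped Matrix BigOperators ComplexOrder

noncomputable section

/-- Square matrices over ℂ indexed by `α`. -/
abbrev Mat (α : Type) : Type := Matrix α α ℂ

/-- A density matrix: positive semidefinite with unit trace. -/
def IsDensity {α : Type} [Fintype α] [DecidableEq α] (ρ : Mat α) : Prop :=
  ρ.PosSemidef ∧ ρ.trace = 1

/-- Hilbert–Schmidt inner product ⟨P, Q⟩ = Tr(P† Q). -/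
def hs {α : Type} [Fintype α] (P Q : Mat α) : ℂ := (Pᴴ * Q).trace

/-- Outer product |v⟩⟨v|. -/
def outer {α : Type} (v : α → ℂ) : Mat α := fun i j => v i * star (v j)

/-- Standard basis vector |i⟩. -/
def ket {α : Type} [DecidableEq α] (i : α) : α → ℂ := fun j => if j = i then 1 else 0

/-- The embedding of Fin 2 into Fin 3. -/
def f23 (y : Fin 2) : Fin 3 := ⟨y.val, by omega⟩

/-- |φ_y⟩ = (|yy⟩ + |22⟩)/√2 ∈ ℂ³ ⊗ ℂ³. -/
def phi (y : Fin 2) : Fin 3 × Fin 3 → ℂ :=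
  fun p => (ket (f23 y, f23 y) p + ket ((2 : Fin 3), (2 : Fin 3)) p) / (Real.sqrt 2 : ℂ)

/-- Partial trace over the first tensor factor. -/
def ptrA {α β : Type} [Fintype α] (ρ : Mat (α × β)) : Mat β :=
  fun b b' => ∑ a, ρ (a, b) (a, b')

/-- |ψ⟩ = (1/2) Σ_{x₀,x₁} |x₀x₁⟩ ∈ X₀ ⊗ X₁. -/
def psiX : Fin 2 × Fin 2 → ℂ := fun _ => 1/2

/-- U_{x₀x₁} = diag((−1)^{x₀}, (−1)^{x₁}, 1) as a diagonal entry function. -/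
def Udiag (x0 x1 : Fin 2) (b : Fin 3) : ℂ :=
  if b = 0 then (-1) ^ (x0 : ℕ) else if b = 1 then (-1) ^ (x1 : ℕ) else 1

/-- U₂ = Σ_{x₀,x₁} |x₀x₁⟩⟨x₀x₁| ⊗ U_{x₀x₁}, acting on X₀ ⊗ X₁ ⊗ B. -/
def U2 : Mat (Fin 2 × Fin 2 × Fin 3) :=
  Matrix.diagonal fun p => Udiag p.1 p.2.1 p.2.2

/-- The state |ψ⟩⟨ψ| ⊗ σ_B on X₀ ⊗ X₁ ⊗ B. -/
def inState (σB : Mat (Fin 3)) : Mat (Fin 2 × Fin 2 × Fin 3) :=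
  fun p q => outer psiX (p.1, p.2.1) (q.1, q.2.1) * σB p.2.2 q.2.2

/-- Partial trace over B, the last factor of X₀ ⊗ X₁ ⊗ B. -/
def trB (ρ : Mat (Fin 2 × Fin 2 × Fin 3)) : Mat (Fin 2 × Fin 2) :=
  fun p q => ∑ b, ρ (p.1, p.2, b) (q.1, q.2, b)

/-- Partial trace over G₀ and G₁, the last two factors of X₀ ⊗ X₁ ⊗ G₀ ⊗ G₁. -/
def trG01 (σ : Mat (Fin 2 × Fin 2 × Fin 2 × Fin 2)) : Mat (Fin 2 × Fin 2) :=
  fun p q => ∑ g0, ∑ g1, σ (p.1, p.2, g0, g1) (q.1, q.2, g0, g1)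

/-- P_accept = Σ_{x₀,x₁} |x₀x₁⟩⟨x₀x₁|_{X₀⊗X₁} ⊗ |x₀x₁⟩⟨x₀x₁|_{G₀⊗G₁}. -/
def Pacc : Mat (Fin 2 × Fin 2 × Fin 2 × Fin 2) := fun p q =>
  match p, q with
  | (x0, x1, g0, g1), (x0', x1', g0', g1') =>
    ∑ u0 : Fin 2, ∑ u1 : Fin 2,
      ket (u0, u1) (x0, x1) * star (ket (u0, u1) (x0', x1')) *
      (ket (u0, u1) (g0, g1) * star (ket (u0, u1) (g0', g1')))

/-- The constraint Tr_{G₀,G₁}(σ) = Tr_B(U₂(|ψ⟩⟨ψ| ⊗ σ_B)U₂†). -/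
def OTconstraint (σ : Mat (Fin 2 × Fin 2 × Fin 2 × Fin 2)) (σB : Mat (Fin 3)) : Prop :=
  trG01 σ = trB (U2 * inState σB * U2ᴴ)

-- auxiliary development
abbrev XX : Type := Fin 2 × Fin 2
abbrev II : Type := Fin 2 × Fin 2 × Fin 2 × Fin 2

/-- sign vector from Udiag -/
def ud (b : Fin 3) (x : XX) : ℂ := Udiag x.1 x.2 b

/-- the fourth sign vector -/
def dd (x : XX) : ℂ := (-1) ^ ((x.1 : ℕ) + (x.2 : ℕ))

lemma ud_star (b : Fin 3) (x : XX) : star (ud b x) = ud b x := by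
  rcases x with ⟨x0, x1⟩
  fin_cases b <;> fin_cases x0 <;> fin_cases x1 <;> simp [ud, Udiag]

lemma dd_star (x : XX) : star (dd x) = dd x := by
  rcases x with ⟨x0, x1⟩
  fin_cases x0 <;> fin_cases x1 <;> simp [dd]

lemma ud_normSq (b : Fin 3) (x : XX) : Complex.normSq (ud b x) = 1 := by
  rcases x with ⟨x0, x1⟩
  fin_cases b <;> fin_cases x0 <;> fin_cases x1 <;> simp [ud, Udiag]

lemma P2 (b c : Fin 3) : ∑ x : XX, ud b x * ud c x = if b = c then 4 else 0 := by
  fin_cases b <;> fin_cases c <;>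
    simp [Fintype.sum_prod_type, Fin.sum_univ_two, ud, Udiag] <;> norm_num

lemma P3 (b : Fin 3) : ∑ x : XX, ud b x * dd x = 0 := by
  fin_cases b <;>
    simp [Fintype.sum_prod_type, Fin.sum_univ_two, ud, dd, Udiag] <;> norm_num

lemma Udiag_zero (x0 x1 : Fin 2) : Udiag x0 x1 0 = (-1) ^ (x0 : ℕ) := by
  simp [Udiag]

lemma Udiag_one (x0 x1 : Fin 2) : Udiag x0 x1 1 = (-1) ^ (x1 : ℕ) := by
  simp [Udiag, show (1 : Fin 3) ≠ 0 by decide]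

lemma Udiag_two (x0 x1 : Fin 2) : Udiag x0 x1 2 = 1 := by
  simp [Udiag, show (2 : Fin 3) ≠ 0 by decide, show (2 : Fin 3) ≠ 1 by decide]

lemma P1 (u x : XX) :
    (∑ b : Fin 3, ud b u * ud b x) + dd u * dd x = if u = x then 4 else 0 := by
  rcases u with ⟨u0, u1⟩; rcases x with ⟨x0, x1⟩
  fin_cases u0 <;> fin_cases u1 <;> fin_cases x0 <;> fin_cases x1 <;>
    norm_num [Fin.sum_univ_three, ud, dd, Udiag_zero, Udiag_one, Udiag_two, Prod.ext_iff]

lemma trB_eval (σB : Mat (Fin 3)) (x y : XX) :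
    trB (U2 * inState σB * U2ᴴ) x y
      = (1/4) * ∑ b : Fin 3, ud b x * ud b y * σB b b := by
  have h : ∀ p q : Fin 2 × Fin 2 × Fin 3,
      (U2 * inState σB * U2ᴴ) p q
        = Udiag p.1 p.2.1 p.2.2 * inState σB p q * star (Udiag q.1 q.2.1 q.2.2) := by
    intro p q
    rw [U2, Matrix.diagonal_conjTranspose, Matrix.mul_diagonal, Matrix.diagonal_mul]
    rfl
  unfold trB
  rw [Finset.mul_sum]
  refine Finset.sum_congr rfl fun b _ => ?_
  rw [h]
  have hu : star (Udiag y.1 y.2 b) = Udiag y.1 y.2 b := ud_star b (y.1, y.2)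
  rw [hu]
  simp only [inState, outer, psiX, ud]
  have : star (1/2 : ℂ) = 1/2 := by norm_num
  rw [this]
  ring

lemma ket_pair_eval (u0 u1 : Fin 2) (q : II) :
    ket (u0, u1) (q.1, q.2.1) * ket (u0, u1) (q.2.2.1, q.2.2.2)
      = if q = (u0, u1, u0, u1) then 1 else 0 := by
  rcases q with ⟨a, b, c, d⟩
  simp only [ket, Prod.ext_iff]
  by_cases h1 : a = u0 <;> by_cases h2 : b = u1 <;> by_cases h3 : c = u0 <;>
    by_cases h4 : d = u1 <;> simp_all

lemma star_ket {α : Type} [DecidableEq α] (i j : α) : star (ket i j) = ket i j := by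
  simp [ket, apply_ite (star : ℂ → ℂ)]

lemma Pacc_apply (p q : II) :
    Pacc p q = ∑ u0 : Fin 2, ∑ u1 : Fin 2,
      (if p = (u0, u1, u0, u1) then (1:ℂ) else 0) * (if q = (u0, u1, u0, u1) then 1 else 0) := by
  rcases p with ⟨x0, x1, g0, g1⟩
  rcases q with ⟨y0, y1, h0, h1⟩
  show (∑ u0 : Fin 2, ∑ u1 : Fin 2,
      ket (u0, u1) (x0, x1) * star (ket (u0, u1) (y0, y1)) *
      (ket (u0, u1) (g0, g1) * star (ket (u0, u1) (h0, h1)))) = _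
  refine Finset.sum_congr rfl fun u0 _ => Finset.sum_congr rfl fun u1 _ => ?_
  rw [star_ket, star_ket]
  have h1' := ket_pair_eval u0 u1 (x0, x1, g0, g1)
  have h2' := ket_pair_eval u0 u1 (y0, y1, h0, h1)
  simp only [ket] at *
  rw [← h1', ← h2']
  ring

lemma hs_Pacc (σ : Mat II) :
    hs σ Pacc = ∑ u : XX, star (σ (u.1, u.2, u.1, u.2) (u.1, u.2, u.1, u.2)) := by
  unfold hs Matrix.trace
  simp only [Matrix.diag, Matrix.mul_apply, Matrix.conjTranspose_apply]
  have : ∀ p q : II, star (σ q p) * Pacc q p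
      = ∑ u0 : Fin 2, ∑ u1 : Fin 2,
          (if q = (u0, u1, u0, u1) then (1:ℂ) else 0) *
          ((if p = (u0, u1, u0, u1) then (1:ℂ) else 0) * star (σ q p)) := by
    intro p q
    rw [Pacc_apply]
    rw [Finset.mul_sum]
    refine Finset.sum_congr rfl fun u0 _ => ?_
    rw [Finset.mul_sum]
    refine Finset.sum_congr rfl fun u1 _ => ?_
    ring
  simp only [this, Fin.sum_univ_two, ite_mul, one_mul, zero_mul,
    Finset.sum_add_distrib, Finset.sum_ite_eq', Finset.mem_univ, if_true]
  simp [Fintype.sum_prod_type, Fin.sum_univ_two]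
  ring

/-- weighted Cauchy–Schwarz for three complex numbers -/
lemma cs3 {β0 β1 β2 : ℝ} (h0 : 0 < β0) (h1 : 0 < β1) (h2 : 0 < β2) (z0 z1 z2 : ℂ) :
    Complex.normSq (z0 + z1 + z2)
      ≤ (β0 + β1 + β2) * (Complex.normSq z0 / β0 + Complex.normSq z1 / β1
          + Complex.normSq z2 / β2) := by
  set a0 := ‖z0‖ with ha0
  set a1 := ‖z1‖ with ha1
  set a2 := ‖z2‖ with ha2
  have habs : ‖z0 + z1 + z2‖ ≤ a0 + a1 + a2 :=
    le_trans (norm_add_le _ _) (by gcongr; exact norm_add_le _ _)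
  have hn : Complex.normSq (z0 + z1 + z2) ≤ (a0 + a1 + a2) ^ 2 := by
    rw [← Complex.sq_norm]
    have h := norm_nonneg (z0 + z1 + z2)
    nlinarith [habs]
  refine hn.trans ?_
  rw [← Complex.sq_norm z0, ← Complex.sq_norm z1, ← Complex.sq_norm z2]
  rw [div_add_div _ _ (ne_of_gt h0) (ne_of_gt h1), div_add_div _ _ (mul_ne_zero (ne_of_gt h0) (ne_of_gt h1)) (ne_of_gt h2)]
  rw [← mul_div_assoc, le_div_iff₀ (by positivity)]
  nlinarith [mul_nonneg h2.le (sq_nonneg (a0*β1 - a1*β0)),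
    mul_nonneg h1.le (sq_nonneg (a0*β2 - a2*β0)),
    mul_nonneg h0.le (sq_nonneg (a1*β2 - a2*β1))]

/-- outer products are positive semidefinite -/
lemma outer_posSemidef {α : Type} [Fintype α] [DecidableEq α] (v : α → ℂ) :
    (outer v).PosSemidef := by
  refine Matrix.PosSemidef.of_dotProduct_mulVec_nonneg ?_ ?_
  · ext i j
    simp [outer, Matrix.conjTranspose_apply, mul_comm]
  · intro x
    have : dotProduct (star x) (outer v *ᵥ x)
        = (∑ i, star (x i) * v i) * star (∑ i, star (x i) * v i) := by
      simp only [dotProduct, Matrix.mulVec, outer, Pi.star_apply, star_sum,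
        star_mul', star_star]
      rw [Finset.sum_mul_sum]
      refine Finset.sum_congr rfl fun i _ => ?_
      rw [Finset.mul_sum]
      refine Finset.sum_congr rfl fun j _ => ?_
      ring
    rw [this]
    exact mul_star_self_nonneg _

lemma upper_bound (σ : Mat II) (σB : Mat (Fin 3))
    (hσ : σ.PosSemidef) (hBtr : σB.trace = 1)
    (hc : OTconstraint σ σB) : (hs σ Pacc).re ≤ 3/4 := by
  obtain ⟨B, hB⟩ : ∃ B : Mat II, σ = Bᴴ * B := by
    open scoped MatrixOrder in exact CStarAlgebra.nonneg_iff_eq_star_mul_self.mp hσ.nonneg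
  have hent : ∀ p q : II, σ p q = ∑ k : II, star (B k p) * B k q := by
    intro p q; rw [hB, Matrix.mul_apply]; simp [Matrix.conjTranspose_apply]
  set W : (XX → ℂ) → XX → II → ℂ :=
    fun v g k => ∑ x : XX, v x * B k (x.1, x.2, g.1, g.2) with hW
  -- Step 1: quadratic forms of the Hadamard-transformed columns
  have L1 : ∀ v : XX → ℂ, (∀ x, star (v x) = v x) →
      ∑ g : XX, ∑ k : II, ((Complex.normSq (W v g k) : ℂ))
        = ∑ x : XX, ∑ y : XX, v x * v y * trG01 σ x y := by
    intro v hv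
    have h1 : ∀ g k, ((Complex.normSq (W v g k) : ℂ))
        = ∑ x : XX, ∑ y : XX,
            v x * v y * (star (B k (x.1,x.2,g.1,g.2)) * B k (y.1,y.2,g.1,g.2)) := by
      intro g k
      rw [← Complex.mul_conj (W v g k)]
      have hstar : (starRingEnd ℂ) (W v g k)
          = ∑ x : XX, v x * star (B k (x.1,x.2,g.1,g.2)) := by
        rw [hW]
        rw [map_sum]
        refine Finset.sum_congr rfl fun x _ => ?_
        rw [_root_.map_mul, show (starRingEnd ℂ) (v x) = v x from hv x]
        rfl
      rw [hstar, hW]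
      rw [Finset.sum_mul_sum, Finset.sum_comm]
      exact Finset.sum_congr rfl fun x _ => Finset.sum_congr rfl fun y _ => by ring
    calc ∑ g : XX, ∑ k : II, ((Complex.normSq (W v g k) : ℂ))
        = ∑ g : XX, ∑ k : II, ∑ x : XX, ∑ y : XX,
            v x * v y * (star (B k (x.1,x.2,g.1,g.2)) * B k (y.1,y.2,g.1,g.2)) :=
          Finset.sum_congr rfl fun g _ => Finset.sum_congr rfl fun k _ => h1 g k
      _ = ∑ g : XX, ∑ x : XX, ∑ y : XX, ∑ k : II,
            v x * v y * (star (B k (x.1,x.2,g.1,g.2)) * B k (y.1,y.2,g.1,g.2)) := by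
          refine Finset.sum_congr rfl fun g _ => ?_
          rw [Finset.sum_comm]
          exact Finset.sum_congr rfl fun x _ => Finset.sum_comm
      _ = ∑ x : XX, ∑ y : XX, ∑ g : XX, ∑ k : II,
            v x * v y * (star (B k (x.1,x.2,g.1,g.2)) * B k (y.1,y.2,g.1,g.2)) := by
          rw [Finset.sum_comm]
          exact Finset.sum_congr rfl fun x _ => Finset.sum_comm
      _ = ∑ x : XX, ∑ y : XX, v x * v y * trG01 σ x y := by
          refine Finset.sum_congr rfl fun x _ => Finset.sum_congr rfl fun y _ => ?_
          rw [show trG01 σ x y = ∑ g : XX, σ (x.1,x.2,g.1,g.2) (y.1,y.2,g.1,g.2) by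
            rw [Fintype.sum_prod_type]; rfl]
          rw [Finset.mul_sum]
          refine Finset.sum_congr rfl fun g _ => ?_
          rw [hent]
          rw [Finset.mul_sum]
  -- Step 2: evaluate the constraint against the sign vectors
  have L2 : ∀ c : Fin 3,
      ∑ x : XX, ∑ y : XX, ud c x * ud c y * trG01 σ x y = 4 * σB c c := by
    intro c
    have key : ∀ x y : XX, ud c x * ud c y * trG01 σ x y
        = ∑ b : Fin 3, (1/4 : ℂ) * σB b b * ((ud c x * ud b x) * (ud c y * ud b y)) := by
      intro x y
      rw [hc, trB_eval]
      simp only [Finset.mul_sum]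
      exact Finset.sum_congr rfl fun b _ => by ring
    simp only [key]
    calc ∑ x : XX, ∑ y : XX, ∑ b : Fin 3,
            (1/4 : ℂ) * σB b b * ((ud c x * ud b x) * (ud c y * ud b y))
        = ∑ b : Fin 3, ∑ x : XX, ∑ y : XX,
            (1/4 : ℂ) * σB b b * ((ud c x * ud b x) * (ud c y * ud b y)) := by
          exact Eq.trans (Finset.sum_congr rfl fun x _ => Finset.sum_comm) Finset.sum_comm
      _ = ∑ b : Fin 3, (1/4 : ℂ) * σB b b *
            ((∑ x : XX, ud c x * ud b x) * (∑ y : XX, ud c y * ud b y)) := by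
          refine Finset.sum_congr rfl fun b _ => ?_
          rw [Finset.sum_mul_sum]
          simp only [Finset.mul_sum]
      _ = 4 * σB c c := by
          simp only [P2]
          have hb : ∀ b : Fin 3, (1/4:ℂ) * σB b b *
              ((if c = b then (4:ℂ) else 0) * (if c = b then (4:ℂ) else 0))
              = if b = c then 4 * σB b b else 0 := by
            intro b
            by_cases h : c = b
            · subst h; simp; ring
            · simp [h, Ne.symm h]
          simp only [hb]
          rw [Finset.sum_ite_eq']
          simp
  have L2d : ∑ x : XX, ∑ y : XX, dd x * dd y * trG01 σ x y = 0 := by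
    have key : ∀ x y : XX, dd x * dd y * trG01 σ x y
        = ∑ b : Fin 3, (1/4 : ℂ) * σB b b * ((ud b x * dd x) * (ud b y * dd y)) := by
      intro x y
      rw [hc, trB_eval]
      simp only [Finset.mul_sum]
      exact Finset.sum_congr rfl fun b _ => by ring
    simp only [key]
    calc ∑ x : XX, ∑ y : XX, ∑ b : Fin 3,
            (1/4 : ℂ) * σB b b * ((ud b x * dd x) * (ud b y * dd y))
        = ∑ b : Fin 3, ∑ x : XX, ∑ y : XX,
            (1/4 : ℂ) * σB b b * ((ud b x * dd x) * (ud b y * dd y)) := by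
          exact Eq.trans (Finset.sum_congr rfl fun x _ => Finset.sum_comm) Finset.sum_comm
      _ = ∑ b : Fin 3, (1/4 : ℂ) * σB b b *
            ((∑ x : XX, ud b x * dd x) * (∑ y : XX, ud b y * dd y)) := by
          refine Finset.sum_congr rfl fun b _ => ?_
          rw [Finset.sum_mul_sum]
          simp only [Finset.mul_sum]
      _ = 0 := by simp [P3]
  -- real diagonal data
  set s : Fin 3 → ℝ := fun b => (σB b b).re with hsdef
  have hSb : ∀ b : Fin 3,
      ∑ g : XX, ∑ k : II, Complex.normSq (W (ud b) g k) = 4 * s b := by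
    intro b
    have h := (L1 (ud b) (ud_star b)).trans (L2 b)
    have hcast : ((∑ g : XX, ∑ k : II, Complex.normSq (W (ud b) g k) : ℝ) : ℂ)
        = 4 * σB b b := by
      rw [← h]; push_cast; rfl
    have := congrArg Complex.re hcast
    simpa [hsdef] using this
  have hsnn : ∀ b, 0 ≤ s b := by
    intro b
    have h := hSb b
    have : (0:ℝ) ≤ ∑ g : XX, ∑ k : II, Complex.normSq (W (ud b) g k) :=
      Finset.sum_nonneg fun g _ => Finset.sum_nonneg fun k _ => Complex.normSq_nonneg _
    linarith
  have hssum : s 0 + s 1 + s 2 = 1 := by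
    have h : σB 0 0 + σB 1 1 + σB 2 2 = 1 := by
      rw [← hBtr, Matrix.trace, Fin.sum_univ_three]; rfl
    have := congrArg Complex.re h
    simpa [hsdef] using this
  -- the fourth component vanishes
  have hWdd : ∀ (g : XX) (k : II), W dd g k = 0 := by
    have h := (L1 dd dd_star).trans L2d
    have hre : ∑ g : XX, ∑ k : II, Complex.normSq (W dd g k) = 0 := by
      have hcast : ((∑ g : XX, ∑ k : II, Complex.normSq (W dd g k) : ℝ) : ℂ) = 0 := by
        rw [← h]; push_cast; rfl
      exact_mod_cast hcast
    intro g k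
    have h1 := (Finset.sum_eq_zero_iff_of_nonneg (fun g _ =>
      Finset.sum_nonneg fun k _ => Complex.normSq_nonneg (W dd g k))).mp hre g (Finset.mem_univ g)
    have h2 := (Finset.sum_eq_zero_iff_of_nonneg (fun k _ =>
      Complex.normSq_nonneg (W dd g k))).mp h1 k (Finset.mem_univ k)
    exact Complex.normSq_eq_zero.mp h2
  -- reconstruction of diagonal columns
  have hA : ∀ (u : XX) (k : II), (4:ℂ) * B k (u.1,u.2,u.1,u.2)
      = ∑ b : Fin 3, ud b u * W (ud b) u k := by
    intro u k
    have expand : (∑ b : Fin 3, ud b u * W (ud b) u k) + dd u * W dd u k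
        = ∑ x : XX, ((∑ b : Fin 3, ud b u * ud b x) + dd u * dd x)
            * B k (x.1,x.2,u.1,u.2) := by
      simp only [hW, Finset.mul_sum]
      rw [Finset.sum_comm]
      rw [← Finset.sum_add_distrib]
      refine Finset.sum_congr rfl fun x _ => ?_
      rw [add_mul, Finset.sum_mul]
      ring_nf
      congr 1
      exact Finset.sum_congr rfl fun b _ => by ring
    have h2 : (∑ b : Fin 3, ud b u * W (ud b) u k) + dd u * W dd u k
        = (4:ℂ) * B k (u.1,u.2,u.1,u.2) := by
      rw [expand]
      simp only [P1, ite_mul, zero_mul]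
      rw [Finset.sum_ite_eq]
      simp
    rw [← h2, hWdd, mul_zero, add_zero]
  -- objective in terms of B
  have hobj : (hs σ Pacc).re
      = ∑ u : XX, ∑ k : II, Complex.normSq (B k (u.1,u.2,u.1,u.2)) := by
    rw [hs_Pacc]
    have hval : ∀ u : XX, star (σ (u.1, u.2, u.1, u.2) (u.1, u.2, u.1, u.2))
        = ((∑ k : II, Complex.normSq (B k (u.1,u.2,u.1,u.2)) : ℝ) : ℂ) := by
      intro u
      rw [hent]
      have : ∑ k : II, star (B k (u.1,u.2,u.1,u.2)) * B k (u.1,u.2,u.1,u.2)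
          = ((∑ k : II, Complex.normSq (B k (u.1,u.2,u.1,u.2)) : ℝ) : ℂ) := by
        push_cast
        refine Finset.sum_congr rfl fun k _ => ?_
        rw [mul_comm, Complex.star_def, Complex.mul_conj]
      rw [this, Complex.star_def, Complex.conj_ofReal]
    simp only [hval]
    rw [← Complex.ofReal_sum]
    simp
  -- the ε-perturbed bound
  have main : ∀ ε : ℝ, 0 < ε → (hs σ Pacc).re ≤ 3/4 + 3 * ε := by
    intro ε hε
    set t : Fin 3 → ℝ := fun b => Real.sqrt (s b) with ht
    set β : Fin 3 → ℝ := fun b => t b + ε with hβ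
    have htnn : ∀ b, 0 ≤ t b := fun b => Real.sqrt_nonneg _
    have hβpos : ∀ b, 0 < β b := fun b => add_pos_of_nonneg_of_pos (htnn b) hε
    have hts : ∀ b, t b ^ 2 = s b := fun b => Real.sq_sqrt (hsnn b)
    have hcs : ∀ (u : XX) (k : II), 16 * Complex.normSq (B k (u.1,u.2,u.1,u.2))
        ≤ (β 0 + β 1 + β 2) * (Complex.normSq (W (ud 0) u k) / β 0
            + Complex.normSq (W (ud 1) u k) / β 1
            + Complex.normSq (W (ud 2) u k) / β 2) := by
      intro u k
      have h4 : (4:ℂ) * B k (u.1,u.2,u.1,u.2)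
          = ud 0 u * W (ud 0) u k + ud 1 u * W (ud 1) u k + ud 2 u * W (ud 2) u k := by
        rw [hA, Fin.sum_univ_three]
      have hc3 := cs3 (hβpos 0) (hβpos 1) (hβpos 2)
        (ud 0 u * W (ud 0) u k) (ud 1 u * W (ud 1) u k) (ud 2 u * W (ud 2) u k)
      rw [← h4] at hc3
      have hl : Complex.normSq ((4:ℂ) * B k (u.1,u.2,u.1,u.2))
          = 16 * Complex.normSq (B k (u.1,u.2,u.1,u.2)) := by
        rw [Complex.normSq_mul]; norm_num
      rw [hl] at hc3
      simpa [Complex.normSq_mul, ud_normSq] using hc3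
    have hsum : ∑ u : XX, ∑ k : II, 16 * Complex.normSq (B k (u.1,u.2,u.1,u.2))
        ≤ ∑ u : XX, ∑ k : II, ((β 0 + β 1 + β 2) *
            (Complex.normSq (W (ud 0) u k) / β 0
            + Complex.normSq (W (ud 1) u k) / β 1
            + Complex.normSq (W (ud 2) u k) / β 2)) :=
      Finset.sum_le_sum fun u _ => Finset.sum_le_sum fun k _ => hcs u k
    have hR : ∑ u : XX, ∑ k : II, ((β 0 + β 1 + β 2) *
            (Complex.normSq (W (ud 0) u k) / β 0
            + Complex.normSq (W (ud 1) u k) / β 1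
            + Complex.normSq (W (ud 2) u k) / β 2))
        = (β 0 + β 1 + β 2) * ((4 * s 0) / β 0 + (4 * s 1) / β 1 + (4 * s 2) / β 2) := by
      rw [← hSb 0, ← hSb 1, ← hSb 2]
      simp only [← Finset.mul_sum]
      congr 1
      simp only [Finset.sum_div]
      rw [← Finset.sum_add_distrib, ← Finset.sum_add_distrib]
      refine Finset.sum_congr rfl fun u _ => ?_
      rw [← Finset.sum_add_distrib, ← Finset.sum_add_distrib]
    have hobj16 : ∑ u : XX, ∑ k : II, 16 * Complex.normSq (B k (u.1,u.2,u.1,u.2))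
        = 16 * (hs σ Pacc).re := by
      rw [hobj]
      simp only [← Finset.mul_sum]
    rw [hobj16, hR] at hsum
    -- now pure real arithmetic
    have hdb : ∀ b, s b / β b ≤ t b := by
      intro b
      rw [div_le_iff₀ (hβpos b), show β b = t b + ε from rfl]
      nlinarith [hts b, htnn b, hε.le]
    have hT2 : (t 0 + t 1 + t 2) ^ 2 ≤ 3 := by
      nlinarith [sq_nonneg (t 0 - t 1), sq_nonneg (t 0 - t 2), sq_nonneg (t 1 - t 2),
        hts 0, hts 1, hts 2, hssum]
    have hT : t 0 + t 1 + t 2 ≤ 2 := by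
      nlinarith [htnn 0, htnn 1, htnn 2]
    have hβs : β 0 + β 1 + β 2 = (t 0 + t 1 + t 2) + 3 * ε := by
      simp only [hβ]; ring
    have hfinal : (β 0 + β 1 + β 2) * ((4 * s 0) / β 0 + (4 * s 1) / β 1 + (4 * s 2) / β 2)
        ≤ 16 * (3/4 + 3 * ε) := by
      have h0 : (4 * s 0) / β 0 = 4 * (s 0 / β 0) := by ring
      have h1 : (4 * s 1) / β 1 = 4 * (s 1 / β 1) := by ring
      have h2 : (4 * s 2) / β 2 = 4 * (s 2 / β 2) := by ring
      rw [h0, h1, h2, hβs]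
      have hnnd : ∀ b, 0 ≤ s b / β b := fun b => div_nonneg (hsnn b) (hβpos b).le
      nlinarith [hdb 0, hdb 1, hdb 2, hnnd 0, hnnd 1, hnnd 2, hT2, hT, hε.le,
        htnn 0, htnn 1, htnn 2]
    linarith
  -- conclude
  refine le_of_forall_pos_le_add fun ε hε => ?_
  have := main (ε/3) (by linarith)
  linarith

/-! ### The optimal witness -/

def cP (p : II) : ℂ := ∑ b : Fin 3, ud b (p.1, p.2.1) * ud b (p.2.2.1, p.2.2.2)

def rr : ℝ := (Real.sqrt 3)⁻¹ * (1/4)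

def Phi (p : II) : ℂ := cP p * (rr : ℂ)

lemma rr_sq : (rr : ℂ) * (rr : ℂ) = 1/48 := by
  have h3 : Real.sqrt 3 * Real.sqrt 3 = 3 := Real.mul_self_sqrt (by norm_num)
  have h0 : Real.sqrt 3 ≠ 0 := by positivity
  have hr : rr * rr = 1/48 := by
    rw [rr]; field_simp; linarith
  calc (rr : ℂ) * (rr : ℂ) = ((rr * rr : ℝ) : ℂ) := by push_cast; ring
    _ = 1/48 := by rw [hr]; push_cast; ring

lemma ud_mul_self (b : Fin 3) (x : XX) : ud b x * ud b x = 1 := by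
  have h := Complex.mul_conj (ud b x)
  rw [← Complex.star_def, ud_star, ud_normSq] at h
  simpa using h

lemma cP_star (p : II) : star (cP p) = cP p := by
  simp [cP, star_sum, star_mul', ud_star, mul_comm]

lemma sum_II {M : Type} [AddCommMonoid M] (f : II → M) :
    ∑ p : II, f p = ∑ x : XX, ∑ g : XX, f (x.1, x.2, g.1, g.2) := by
  simp only [Fintype.sum_prod_type]

lemma T2 (x y : XX) :
    ∑ g : XX, cP (x.1, x.2, g.1, g.2) * cP (y.1, y.2, g.1, g.2)
      = 4 * ∑ b : Fin 3, ud b x * ud b y := by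
  have hc : ∀ (z : XX) (g : XX), cP (z.1, z.2, g.1, g.2) = ∑ b : Fin 3, ud b z * ud b g :=
    fun z g => rfl
  calc ∑ g : XX, cP (x.1, x.2, g.1, g.2) * cP (y.1, y.2, g.1, g.2)
      = ∑ g : XX, ∑ b : Fin 3, ∑ b' : Fin 3, (ud b x * ud b' y) * (ud b g * ud b' g) := by
        refine Finset.sum_congr rfl fun g _ => ?_
        rw [hc, hc, Finset.sum_mul_sum]
        exact Finset.sum_congr rfl fun b _ => Finset.sum_congr rfl fun b' _ => by ring
    _ = ∑ b : Fin 3, ∑ b' : Fin 3, (ud b x * ud b' y) * ∑ g : XX, ud b g * ud b' g := by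
        rw [show (∑ g : XX, ∑ b : Fin 3, ∑ b' : Fin 3, (ud b x * ud b' y) * (ud b g * ud b' g))
            = ∑ b : Fin 3, ∑ g : XX, ∑ b' : Fin 3, (ud b x * ud b' y) * (ud b g * ud b' g)
          from Finset.sum_comm]
        refine Finset.sum_congr rfl fun b _ => ?_
        rw [show (∑ g : XX, ∑ b' : Fin 3, (ud b x * ud b' y) * (ud b g * ud b' g))
            = ∑ b' : Fin 3, ∑ g : XX, (ud b x * ud b' y) * (ud b g * ud b' g)
          from Finset.sum_comm]
        exact Finset.sum_congr rfl fun b' _ => by rw [Finset.mul_sum]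
    _ = 4 * ∑ b : Fin 3, ud b x * ud b y := by
        simp only [P2]
        rw [Finset.mul_sum]
        refine Finset.sum_congr rfl fun b _ => ?_
        rw [show (∑ b' : Fin 3, (ud b x * ud b' y) * if b = b' then (4:ℂ) else 0)
            = ∑ b' : Fin 3, if b = b' then (ud b x * ud b' y) * 4 else 0 from
          Finset.sum_congr rfl fun b' _ => by split_ifs <;> simp]
        rw [Finset.sum_ite_eq]
        simp [mul_comm]

lemma wit_density : IsDensity (outer Phi) := by
  refine ⟨outer_posSemidef Phi, ?_⟩
  have htr : (outer Phi).trace = ∑ p : II, Phi p * star (Phi p) := by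
    rw [Matrix.trace]; rfl
  rw [htr]
  have hterm : ∀ p : II, Phi p * star (Phi p) = cP p * cP p * ((rr:ℂ) * (rr:ℂ)) := by
    intro p
    simp only [Phi, star_mul', cP_star, Complex.star_def, Complex.conj_ofReal]
    ring
  simp only [hterm]
  rw [← Finset.sum_mul, rr_sq]
  have h48 : ∑ p : II, cP p * cP p = 48 := by
    rw [sum_II (fun p => cP p * cP p)]
    have h12 : ∀ x : XX, ∑ g : XX, cP (x.1, x.2, g.1, g.2) * cP (x.1, x.2, g.1, g.2) = 12 := by
      intro x
      rw [T2 x x]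
      simp only [ud_mul_self]
      norm_num [Finset.sum_const, Finset.card_univ]
    simp only [h12]
    norm_num [Finset.sum_const, Finset.card_univ]
  rw [h48]
  norm_num

lemma sigB_density : IsDensity ((1/3 : ℂ) • (1 : Mat (Fin 3))) := by
  constructor
  · have hdiag : (1/3 : ℂ) • (1 : Mat (Fin 3)) = Matrix.diagonal (fun _ => (1/3 : ℂ)) := by
      rw [← Matrix.diagonal_one]
      ext i j
      by_cases h : i = j <;> simp [Matrix.diagonal, h]
    rw [hdiag]
    refine Matrix.PosSemidef.diagonal ?_
    intro i
    rw [Complex.le_def]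
    norm_num
  · rw [Matrix.trace_smul, Matrix.trace_one]
    norm_num

lemma wit_constraint : OTconstraint (outer Phi) ((1/3 : ℂ) • (1 : Mat (Fin 3))) := by
  unfold OTconstraint
  ext x y
  rw [trB_eval]
  have hL : trG01 (outer Phi) x y
      = ∑ g : XX, Phi (x.1, x.2, g.1, g.2) * star (Phi (y.1, y.2, g.1, g.2)) := by
    rw [trG01, Fintype.sum_prod_type]
    rfl
  rw [hL]
  have hterm : ∀ g : XX, Phi (x.1, x.2, g.1, g.2) * star (Phi (y.1, y.2, g.1, g.2))
      = cP (x.1, x.2, g.1, g.2) * cP (y.1, y.2, g.1, g.2) * ((rr:ℂ) * (rr:ℂ)) := by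
    intro g
    simp only [Phi, star_mul', cP_star, Complex.star_def, Complex.conj_ofReal]
    ring
  simp only [hterm]
  rw [← Finset.sum_mul, T2 x y, rr_sq]
  have hone : ∀ b : Fin 3, ((1/3 : ℂ) • (1 : Mat (Fin 3))) b b = 1/3 := by
    intro b; simp [Matrix.one_apply]
  simp only [hone]
  simp only [Finset.mul_sum, Finset.sum_mul]
  exact Finset.sum_congr rfl fun b _ => by ring

lemma wit_value : (hs (outer Phi) Pacc).re = 3/4 := by
  have h : hs (outer Phi) Pacc = 3/4 := by
    rw [hs_Pacc]
    have hPhiu : ∀ u : XX, Phi (u.1, u.2, u.1, u.2) = 3 * (rr : ℂ) := by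
      intro u
      have : cP (u.1, u.2, u.1, u.2) = 3 := by
        show (∑ b : Fin 3, ud b (u.1, u.2) * ud b (u.1, u.2)) = 3
        simp only [show ∀ b : Fin 3, ud b (u.1, u.2) * ud b (u.1, u.2) = 1 from
          fun b => ud_mul_self b (u.1, u.2)]
        simp
      rw [Phi, this]
    have hterm : ∀ u : XX, star ((outer Phi) (u.1, u.2, u.1, u.2) (u.1, u.2, u.1, u.2))
        = 3/16 := by
      intro u
      have : (outer Phi) (u.1, u.2, u.1, u.2) (u.1, u.2, u.1, u.2)
          = Phi (u.1, u.2, u.1, u.2) * star (Phi (u.1, u.2, u.1, u.2)) := rfl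
      rw [this, hPhiu]
      have hstarr : star ((3:ℂ) * (rr:ℂ)) = 3 * (rr:ℂ) := by
        rw [star_mul']
        simp [Complex.star_def, Complex.conj_ofReal, mul_comm]
      rw [hstarr]
      have : (3:ℂ) * (rr:ℂ) * (3 * (rr:ℂ)) = 9 * ((rr:ℂ) * (rr:ℂ)) := by ring
      rw [this, rr_sq]
      norm_num
    simp only [hterm]
    norm_num [Finset.sum_const, Finset.card_univ]
  rw [h]
  norm_num

theorem oblivious_transfer_cheating_Alice :
    IsGreatest
      {x : ℝ | ∃ (σ : Mat (Fin 2 × Fin 2 × Fin 2 × Fin 2)) (σB : Mat (Fin 3)),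
        IsDensity σ ∧ IsDensity σB ∧ OTconstraint σ σB ∧
        x = (hs σ Pacc).re}
      (3/4)
    ∧ ∃ (σ : Mat (Fin 2 × Fin 2 × Fin 2 × Fin 2)) (σB : Mat (Fin 3)),
        IsDensity σ ∧ IsDensity σB ∧ OTconstraint σ σB ∧
        σB = (1/3 : ℂ) • (1 : Mat (Fin 3)) ∧
        (hs σ Pacc).re = 3/4 := by
  constructor
  · constructor
    · exact ⟨outer Phi, (1/3 : ℂ) • 1, wit_density, sigB_density, wit_constraint,
        wit_value.symm⟩
    · rintro x ⟨σ, σB, hσ, hσB, hc, rfl⟩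
      exact upper_bound σ σB hσ.1 hσB.2 hc
  · exact ⟨outer Phi, (1/3 : ℂ) • 1, wit_density, sigB_density, wit_constraint, rfl,
      wit_value⟩

end
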